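/- Assume m ≤ 2 and that SDPR(δ) has an optimal solution. Then SDPR(δ) admits an optimal solution (Ṽ^1,...,Ṽ^q̂) with rank(Ṽ^q) ≤ 1 for all q = 1,...,q̂. -/

import Mathlib

open Matrix BigOperators

noncomputable section

/-- Trace inner product `⟨A,X⟩ = Σᵢⱼ Aᵢⱼ Xᵢⱼ`. -/
def mInner {N : ℕ} (A X : Matrix (Fin N) (Fin N) ℝ) : ℝ :=
  ∑ i, ∑ j, A i j * X i j

/-- The quadratic function `u ↦ (u,1)ᵀ B (u,1)` on `ℝⁿ`. -/
def quadF {n : ℕ} (B : Matrix (Fin (n + 1)) (Fin (n + 1)) ℝ) (u : Fin n → ℝ) : ℝ :=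
  Fin.snoc u 1 ⬝ᵥ (B *ᵥ Fin.snoc u 1)

/-- A relation on `ℝ` is standard if it is `≤`, `=`, or `≥`. -/
def IsStdRel (r : ℝ → ℝ → Prop) : Prop :=
  r = (· ≤ ·) ∨ r = (· = ·) ∨ r = (· ≥ ·)

section Homogeneous

variable (qhat m : ℕ) (nb : Fin qhat → ℕ)
  (C : (q : Fin qhat) → Fin (m + 1) → Matrix (Fin (nb q)) (Fin (nb q)) ℝ)
  (rel : Fin m → ℝ → ℝ → Prop)

/-- Feasibility of `v = (v¹,…,v^q̂)` for the separable homogeneous QCQP(δ). -/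
def homQCQPFeas (δ : Fin m → ℝ) (v : (q : Fin qhat) → Fin (nb q) → ℝ) : Prop :=
  ∀ k : Fin m, rel k (∑ q, v q ⬝ᵥ (C q k.succ *ᵥ v q)) (δ k)

/-- The optimal value `ζ(δ)` of the separable homogeneous QCQP. -/
def homQCQPVal (δ : Fin m → ℝ) : EReal :=
  sInf {y : EReal | ∃ v : (q : Fin qhat) → Fin (nb q) → ℝ,
    homQCQPFeas qhat m nb C rel δ v ∧
    y = ((∑ q, v q ⬝ᵥ (C q 0 *ᵥ v q) : ℝ) : EReal)}

/-- Feasibility of `V = (V¹,…,V^q̂)` for SDPR(δ). -/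
def homSDPRFeas (δ : Fin m → ℝ)
    (V : (q : Fin qhat) → Matrix (Fin (nb q)) (Fin (nb q)) ℝ) : Prop :=
  (∀ q, (V q).PosSemidef) ∧
    ∀ k : Fin m, rel k (∑ q, mInner (C q k.succ) (V q)) (δ k)

/-- The optimal value `η(δ)` of SDPR(δ). -/
def homSDPRVal (δ : Fin m → ℝ) : EReal :=
  sInf {y : EReal | ∃ V : (q : Fin qhat) → Matrix (Fin (nb q)) (Fin (nb q)) ℝ,
    homSDPRFeas qhat m nb C rel δ V ∧
    y = ((∑ q, mInner (C q 0) (V q) : ℝ) : EReal)}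

/-- `V` is an optimal solution of SDPR(δ): feasible and attaining the infimum. -/
def homSDPROpt (δ : Fin m → ℝ)
    (V : (q : Fin qhat) → Matrix (Fin (nb q)) (Fin (nb q)) ℝ) : Prop :=
  homSDPRFeas qhat m nb C rel δ V ∧
    ((∑ q, mInner (C q 0) (V q) : ℝ) : EReal) = homSDPRVal qhat m nb C rel δ

end Homogeneous

namespace SDPAux

variable {n : ℕ}

lemma mInner_add (A X Y : Matrix (Fin n) (Fin n) ℝ) :
    mInner A (X + Y) = mInner A X + mInner A Y := by
  simp [mInner, Matrix.add_apply, mul_add, Finset.sum_add_distrib]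

lemma mInner_smul (A : Matrix (Fin n) (Fin n) ℝ) (c : ℝ) (X : Matrix (Fin n) (Fin n) ℝ) :
    mInner A (c • X) = c * mInner A X := by
  simp [mInner, Matrix.smul_apply, Finset.mul_sum, mul_left_comm]

/-- symmetric 2×2 combination -/
def blk (u w : Fin n → ℝ) (a b c : ℝ) : Matrix (Fin n) (Fin n) ℝ :=
  a • vecMulVec u u + b • (vecMulVec u w + vecMulVec w u) + c • vecMulVec w w

lemma dot_vecMulVec_mulVec (u w x : Fin n → ℝ) :
    x ⬝ᵥ (vecMulVec u w *ᵥ x) = (u ⬝ᵥ x) * (w ⬝ᵥ x) := by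
  simp only [dotProduct, vecMulVec_apply, mulVec, dotProduct, Finset.mul_sum, Finset.sum_mul]
  rw [Finset.sum_comm]
  apply Finset.sum_congr rfl
  intro i _
  apply Finset.sum_congr rfl
  intro j _
  ring

lemma blk_isHermitian (u w : Fin n → ℝ) (a b c : ℝ) : (blk u w a b c).IsHermitian := by
  ext i j
  simp [blk, Matrix.conjTranspose_apply, vecMulVec_apply]
  ring

lemma blk_psd {u w : Fin n → ℝ} {a b c : ℝ} (ha : 0 ≤ a) (hc : 0 ≤ c) (hb : b * b ≤ a * c) :
    (blk u w a b c).PosSemidef := by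
  refine Matrix.posSemidef_iff_dotProduct_mulVec.mpr ⟨blk_isHermitian u w a b c, fun x => ?_⟩
  have hx : star x = x := by simp
  rw [hx]
  have hval : x ⬝ᵥ (blk u w a b c *ᵥ x)
      = a * ((u ⬝ᵥ x) * (u ⬝ᵥ x)) + b * ((u ⬝ᵥ x) * (w ⬝ᵥ x) + (w ⬝ᵥ x) * (u ⬝ᵥ x))
        + c * ((w ⬝ᵥ x) * (w ⬝ᵥ x)) := by
    simp [blk, Matrix.add_mulVec, Matrix.smul_mulVec, dotProduct_add, dotProduct_smul,
      dot_vecMulVec_mulVec]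
    ring
  rw [hval]
  set p := u ⬝ᵥ x
  set q := w ⬝ᵥ x
  rcases eq_or_lt_of_le ha with h0 | hpos
  · have hb0 : b = 0 := by nlinarith [sq_nonneg b]
    subst hb0
    rw [← h0]
    nlinarith [sq_nonneg q]
  · nlinarith [sq_nonneg (a * p + b * q), mul_nonneg (sub_nonneg.2 hb) (sq_nonneg q)]

lemma blk_eq_vecMulVec {u w : Fin n → ℝ} {a b c : ℝ} (ha : 0 ≤ a) (hc : 0 ≤ c)
    (hb : b * b = a * c) : ∃ z : Fin n → ℝ, blk u w a b c = vecMulVec z z := by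
  rcases eq_or_lt_of_le ha with h0 | hpos
  · have hb0 : b = 0 := by nlinarith [sq_nonneg b]
    refine ⟨Real.sqrt c • w, ?_⟩
    have hsc : Real.sqrt c * Real.sqrt c = c := Real.mul_self_sqrt hc
    ext i j
    simp only [blk, hb0, ← h0, vecMulVec_apply, Pi.smul_apply, smul_eq_mul,
      Matrix.add_apply, Matrix.smul_apply, zero_smul, zero_mul, smul_eq_mul,
      Matrix.zero_apply]
    calc (0:ℝ) + 0 + c * (w i * w j)
        = c * (w i * w j) := by ring
      _ = (Real.sqrt c * Real.sqrt c) * (w i * w j) := by rw [hsc]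
      _ = Real.sqrt c * w i * (Real.sqrt c * w j) := by ring
  · refine ⟨Real.sqrt a • u + (b / Real.sqrt a) • w, ?_⟩
    have hsa : Real.sqrt a * Real.sqrt a = a := Real.mul_self_sqrt ha
    have hsapos : 0 < Real.sqrt a := Real.sqrt_pos.2 hpos
    have hb2 : Real.sqrt a * (b / Real.sqrt a) = b := by
      field_simp
    have hc' : b / Real.sqrt a * (b / Real.sqrt a) = c := by
      rw [div_mul_div_comm, hsa]
      rw [hb]
      field_simp [hpos.ne']
    ext i j
    simp only [blk, vecMulVec_apply, Pi.add_apply, Pi.smul_apply, smul_eq_mul,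
      Matrix.add_apply, Matrix.smul_apply]
    calc a * (u i * u j) + b * (u i * w j + w i * u j) + c * (w i * w j)
        = (Real.sqrt a * Real.sqrt a) * (u i * u j)
          + (Real.sqrt a * (b / Real.sqrt a)) * (u i * w j)
          + (Real.sqrt a * (b / Real.sqrt a)) * (w i * u j)
          + (b / Real.sqrt a * (b / Real.sqrt a)) * (w i * w j) := by
          rw [hsa, hb2, hc']; ring
      _ = (Real.sqrt a * u i + b / Real.sqrt a * w i)
            * (Real.sqrt a * u j + b / Real.sqrt a * w j) := by ring

lemma rank_vecMulVec_le (z : Fin n → ℝ) : (vecMulVec z z).rank ≤ 1 := by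
  rw [Matrix.vecMulVec_eq (Fin 1)]
  refine le_trans (Matrix.rank_mul_le_left _ _) ?_
  exact le_of_le_of_eq (Matrix.rank_le_card_width (Matrix.replicateCol (Fin 1) z)) (by simp)

lemma rank_add_le (A B : Matrix (Fin n) (Fin n) ℝ) : (A + B).rank ≤ A.rank + B.rank := by
  classical
  rw [Matrix.rank, Matrix.rank, Matrix.rank, Matrix.mulVecLin_add]
  have hsub : LinearMap.range (A.mulVecLin + B.mulVecLin)
      ≤ LinearMap.range A.mulVecLin ⊔ LinearMap.range B.mulVecLin := by
    rintro x ⟨v, rfl⟩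
    exact Submodule.mem_sup.2 ⟨A.mulVecLin v, ⟨v, rfl⟩, B.mulVecLin v, ⟨v, rfl⟩, rfl⟩
  exact (Submodule.finrank_mono hsub).trans
    (Submodule.finrank_add_le_finrank_add_finrank _ _)


lemma exists_decomp {X : Matrix (Fin n) (Fin n) ℝ} (hX : X.PosSemidef) (hr : 2 ≤ X.rank) :
    ∃ (B : Matrix (Fin n) (Fin n) ℝ) (u w : Fin n → ℝ) (α β : ℝ),
      B.PosSemidef ∧ 0 < α ∧ 0 < β ∧ B.rank + 2 ≤ X.rank ∧
      X = B + blk u w α 0 β := by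
  classical
  have hH : X.IsHermitian := hX.1
  set lam := hH.eigenvalues with hlam
  set U : Matrix (Fin n) (Fin n) ℝ := (hH.eigenvectorUnitary : Matrix (Fin n) (Fin n) ℝ) with hU
  have hspec : X = U * Matrix.diagonal lam * star U := by
    have := hH.spectral_theorem
    simpa [RCLike.ofReal_real_eq_id] using this
  -- two distinct nonzero eigenvalue indices
  have hcard : 1 < Fintype.card {i // lam i ≠ 0} := by
    have h : X.rank = Fintype.card {i // lam i ≠ 0} := by
      rw [hlam]
      exact hH.rank_eq_card_non_zero_eigs
    omega
  obtain ⟨a, b, hab⟩ := Fintype.exists_pair_of_one_lt_card hcard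
  obtain ⟨i, hi⟩ := a
  obtain ⟨j, hj⟩ := b
  have hij : i ≠ j := fun h => hab (Subtype.ext h)
  have hlami : 0 < lam i := lt_of_le_of_ne (hX.eigenvalues_nonneg i) (Ne.symm hi)
  have hlamj : 0 < lam j := lt_of_le_of_ne (hX.eigenvalues_nonneg j) (Ne.symm hj)
  set lam' : Fin n → ℝ := fun k => if k = i ∨ k = j then 0 else lam k with hlam'
  set B := U * Matrix.diagonal lam' * star U with hB
  have hUunit : IsUnit U.det := by
    have h1 : U * star U = 1 := (Matrix.mem_unitaryGroup_iff.mp hH.eigenvectorUnitary.2)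
    exact IsUnit.of_mul_eq_one _ (by
      have := congrArg Matrix.det h1
      simpa [Matrix.det_mul] using this)
  have hstarUnit : IsUnit (star U).det := by
    have h1 : star U * U = 1 := (Matrix.mem_unitaryGroup_iff'.mp hH.eigenvectorUnitary.2)
    exact IsUnit.of_mul_eq_one _ (by
      have := congrArg Matrix.det h1
      simpa [Matrix.det_mul] using this)
  have hBrank : B.rank = (Matrix.diagonal lam').rank := by
    rw [hB, Matrix.rank_mul_eq_left_of_isUnit_det (star U) _ hstarUnit,
      Matrix.rank_mul_eq_right_of_isUnit_det U _ hUunit]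
  have hXrank : X.rank = (Matrix.diagonal lam).rank := hH.rank_eq_rank_diagonal
  -- rank counting
  have hrankB2 : B.rank + 2 ≤ X.rank := by
    rw [hBrank, hXrank, Matrix.rank_diagonal, Matrix.rank_diagonal]
    rw [Fintype.card_subtype, Fintype.card_subtype]
    have hsub : (Finset.univ.filter fun k => lam' k ≠ 0)
        ⊆ (Finset.univ.filter fun k => lam k ≠ 0) \ {i, j} := by
      intro k hk
      simp only [Finset.mem_filter, Finset.mem_univ, true_and, hlam'] at hk
      by_cases h : k = i ∨ k = j
      · simp [h] at hk
      · push_neg at h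
        simp [Finset.mem_sdiff, Finset.mem_filter, Finset.mem_insert, Finset.mem_singleton,
          h.1, h.2]
        simpa [h.1, h.2] using hk
    have hij' : ({i, j} : Finset (Fin n)) ⊆ Finset.univ.filter fun k => lam k ≠ 0 := by
      intro k hk
      simp only [Finset.mem_insert, Finset.mem_singleton] at hk
      rcases hk with rfl | rfl <;> simp [hi, hj]
    have hcard2 : ({i, j} : Finset (Fin n)).card = 2 := by
      rw [Finset.card_insert_of_notMem (by simp [hij]), Finset.card_singleton]
    have h1 := Finset.card_le_card hsub
    rw [Finset.card_sdiff_of_subset hij'] at h1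
    have h2 : 2 ≤ (Finset.univ.filter fun k => lam k ≠ 0).card := by
      calc 2 = ({i, j} : Finset (Fin n)).card := hcard2.symm
        _ ≤ _ := Finset.card_le_card hij'
    omega
  refine ⟨B, fun k => U k i, fun k => U k j, lam i, lam j, ?_, hlami, hlamj, hrankB2, ?_⟩
  · have hd : Matrix.PosSemidef (Matrix.diagonal lam') := by
      refine Matrix.posSemidef_diagonal_iff.mpr fun k => ?_
      by_cases h : k = i ∨ k = j
      · simp [hlam', h]
      · simp only [hlam', if_neg h]
        exact hX.eigenvalues_nonneg k
    have := hd.mul_mul_conjTranspose_same U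
    rw [hB]; exact this
  · -- entrywise identity
    have hentry : ∀ (d : Fin n → ℝ) (p q : Fin n),
        (U * Matrix.diagonal d * star U) p q = ∑ k, d k * (U p k * U q k) := by
      intro d p q
      rw [Matrix.mul_apply]
      apply Finset.sum_congr rfl
      intro k _
      rw [Matrix.mul_diagonal]
      simp [Matrix.star_apply]
      ring
    ext p q
    rw [hspec]
    simp only [Matrix.add_apply, hB, blk, Matrix.smul_apply, Matrix.zero_apply,
      vecMulVec_apply, smul_eq_mul, zero_mul, Matrix.add_apply]
    rw [hentry lam p q, hentry lam' p q]
    have hsplit : ∑ k, lam k * (U p k * U q k)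
        = ∑ k, lam' k * (U p k * U q k)
          + (lam i * (U p i * U q i) + lam j * (U p j * U q j)) := by
      have : ∀ k, lam k * (U p k * U q k) - lam' k * (U p k * U q k)
          = (if k = i ∨ k = j then lam k * (U p k * U q k) else 0) := by
        intro k
        by_cases h : k = i ∨ k = j
        · simp [hlam', h]
        · simp [hlam', h]
      have hsum : ∑ k, (if k = i ∨ k = j then lam k * (U p k * U q k) else 0)
          = lam i * (U p i * U q i) + lam j * (U p j * U q j) := by
        rw [← Finset.sum_subset (Finset.subset_univ ({i, j} : Finset (Fin n)))]
        · rw [Finset.sum_pair hij]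
          simp
        · intro k _ hk
          simp only [Finset.mem_insert, Finset.mem_singleton] at hk
          push_neg at hk
          simp [hk.1, hk.2]
      calc ∑ k, lam k * (U p k * U q k)
          = ∑ k, (lam' k * (U p k * U q k)
              + (if k = i ∨ k = j then lam k * (U p k * U q k) else 0)) := by
            apply Finset.sum_congr rfl
            intro k _
            have := this k
            linarith
        _ = _ := by rw [Finset.sum_add_distrib, hsum]
    rw [hsplit]
    ring


lemma exists_root {a b s1 s2 s3 t1 : ℝ} (ha : 0 < a) (hb : 0 < b) (ht1 : 0 < t1)
    (hq1 : (a + t1 * s1) * (b + t1 * s2) - (t1 * s3) ^ 2 ≤ 0) :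
    ∃ r : ℝ, 0 < r ∧ (a + r * s1) * (b + r * s2) - (r * s3) ^ 2 = 0 ∧
      0 ≤ a + r * s1 ∧ 0 ≤ b + r * s2 := by
  set q : ℝ → ℝ := fun t => (a + t * s1) * (b + t * s2) - (t * s3) ^ 2 with hqdef
  have hqc : Continuous q := by
    apply Continuous.sub
    · exact ((continuous_const.add (continuous_id.mul continuous_const)).mul
        (continuous_const.add (continuous_id.mul continuous_const)))
    · exact (continuous_id.mul continuous_const).pow 2
  have q0pos : 0 < q 0 := by
    have : q 0 = a * b := by simp [hqdef]
    rw [this]; positivity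
  set S : Set ℝ := Set.Icc 0 t1 ∩ q ⁻¹' {0} with hSdef
  have hSclosed : IsClosed S := isClosed_Icc.inter (isClosed_singleton.preimage hqc)
  have hSne : S.Nonempty := by
    have h0 : (0:ℝ) ∈ Set.Icc (q t1) (q 0) := ⟨hq1, q0pos.le⟩
    obtain ⟨x, hxmem, hqx⟩ := intermediate_value_Icc' ht1.le hqc.continuousOn h0
    exact ⟨x, hxmem, hqx⟩
  have hSbdd : BddBelow S := ⟨0, fun y hy => hy.1.1⟩
  set r := sInf S with hrdef
  have hrS : r ∈ S := hSclosed.csInf_mem hSne hSbdd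
  have hqr : q r = 0 := hrS.2
  have hr01 : r ∈ Set.Icc 0 t1 := hrS.1
  have hrpos : 0 < r := by
    rcases lt_or_eq_of_le hr01.1 with h | h
    · exact h
    · exfalso
      rw [← h] at hqr
      exact absurd hqr (ne_of_gt q0pos)
  have hpos_before : ∀ t, 0 ≤ t → t < r → 0 < q t := by
    intro t ht htr
    by_contra hle
    push_neg at hle
    have h0 : (0:ℝ) ∈ Set.Icc (q t) (q 0) := ⟨hle, q0pos.le⟩
    obtain ⟨x', hx'mem, hqx'⟩ := intermediate_value_Icc' ht hqc.continuousOn h0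
    have hx'S : x' ∈ S :=
      ⟨⟨hx'mem.1, le_trans hx'mem.2 (le_of_lt (lt_of_lt_of_le htr hr01.2))⟩, hqx'⟩
    have hle2 := csInf_le hSbdd hx'S
    have := hx'mem.2
    linarith
  refine ⟨r, hrpos, hqr, ?_, ?_⟩
  · by_contra hneg
    push_neg at hneg
    have hs1neg : s1 < 0 := by nlinarith
    set t2 := -a / s1 with ht2def
    have ht2pos : 0 < t2 := div_pos_of_neg_of_neg (by linarith) hs1neg
    have hzero : a + t2 * s1 = 0 := by
      rw [ht2def]
      field_simp [hs1neg.ne]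
      ring
    have ht2r : t2 < r := by nlinarith
    have hqt2pos := hpos_before t2 ht2pos.le ht2r
    have hqt2 : q t2 = -(t2 * s3) ^ 2 := by
      rw [hqdef]; simp only; rw [hzero]; ring
    nlinarith [sq_nonneg (t2 * s3)]
  · by_contra hneg
    push_neg at hneg
    have hs2neg : s2 < 0 := by nlinarith
    set t2 := -b / s2 with ht2def
    have ht2pos : 0 < t2 := div_pos_of_neg_of_neg (by linarith) hs2neg
    have hzero : b + t2 * s2 = 0 := by
      rw [ht2def]
      field_simp [hs2neg.ne]
      ring
    have ht2r : t2 < r := by nlinarith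
    have hqt2pos := hpos_before t2 ht2pos.le ht2r
    have hqt2 : q t2 = -(t2 * s3) ^ 2 := by
      rw [hqdef]; simp only; rw [hzero]; ring
    nlinarith [sq_nonneg (t2 * s3)]


lemma mInner_blk (M : Matrix (Fin n) (Fin n) ℝ) (u w : Fin n → ℝ) (a b c : ℝ) :
    mInner M (blk u w a b c) = a * mInner M (vecMulVec u u)
      + b * mInner M (vecMulVec u w + vecMulVec w u) + c * mInner M (vecMulVec w w) := by
  rw [blk, mInner_add, mInner_add, mInner_smul, mInner_smul, mInner_smul]

lemma blk_combine (u w : Fin n → ℝ) (a b c a' b' c' t : ℝ) :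
    blk u w a b c + t • blk u w a' b' c' = blk u w (a + t * a') (b + t * b') (c + t * c') := by
  ext i j
  simp only [blk, Matrix.add_apply, Matrix.smul_apply, vecMulVec_apply, smul_eq_mul]
  ring

lemma block_conclude {m' : ℕ} (A0 : Matrix (Fin n) (Fin n) ℝ)
    (A : Fin m' → Matrix (Fin n) (Fin n) ℝ)
    {X B : Matrix (Fin n) (Fin n) ℝ} {u w : Fin n → ℝ} {a c : ℝ} {s : Fin 3 → ℝ}
    (hB : B.PosSemidef) (hrB : B.rank + 2 ≤ X.rank)
    (hXtD : ∀ t : ℝ, X + t • blk u w (s 0) (s 1) (s 2)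
      = B + blk u w (a + t * s 0) (0 + t * s 1) (c + t * s 2))
    (hAD : ∀ k, mInner (A k) (blk u w (s 0) (s 1) (s 2)) = 0)
    (hA0D : mInner A0 (blk u w (s 0) (s 1) (s 2)) = 0)
    (r : ℝ) (hra : 0 ≤ a + r * s 0) (hrc : 0 ≤ c + r * s 2)
    (hdet : (0 + r * s 1) * (0 + r * s 1) = (a + r * s 0) * (c + r * s 2)) :
    ∃ Y : Matrix (Fin n) (Fin n) ℝ, Y.PosSemidef ∧ Y.rank + 1 ≤ X.rank ∧
      mInner A0 Y = mInner A0 X ∧ ∀ k, mInner (A k) Y = mInner (A k) X := by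
  set D := blk u w (s 0) (s 1) (s 2) with hDdef
  refine ⟨X + r • D, ?_, ?_, ?_, ?_⟩
  · rw [hXtD r]
    exact hB.add (blk_psd hra hrc (le_of_eq hdet))
  · obtain ⟨z, hz⟩ := blk_eq_vecMulVec hra hrc hdet
    rw [hXtD r, hz]
    have h1 := rank_add_le B (vecMulVec z z)
    have h2 := rank_vecMulVec_le z
    omega
  · rw [mInner_add, mInner_smul, hA0D]
    ring
  · intro k
    rw [mInner_add, mInner_smul, hAD k]
    ring

set_option maxHeartbeats 1000000 in
lemma block_step {m' : ℕ} (hm2 : m' ≤ 2)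
    (A0 : Matrix (Fin n) (Fin n) ℝ) (A : Fin m' → Matrix (Fin n) (Fin n) ℝ)
    {X : Matrix (Fin n) (Fin n) ℝ} (hX : X.PosSemidef) (hr : 2 ≤ X.rank) :
    (∃ D : Matrix (Fin n) (Fin n) ℝ, mInner A0 D ≠ 0 ∧ (∀ k, mInner (A k) D = 0) ∧
      ∃ τ : ℝ, 0 < τ ∧ ∀ t : ℝ, |t| ≤ τ → (X + t • D).PosSemidef)
    ∨ (∃ Y : Matrix (Fin n) (Fin n) ℝ, Y.PosSemidef ∧ Y.rank + 1 ≤ X.rank ∧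
        mInner A0 Y = mInner A0 X ∧ ∀ k, mInner (A k) Y = mInner (A k) X) := by
  classical
  obtain ⟨B, u, w, a, c, hB, hapos, hcpos, hrB, hXeq⟩ := exists_decomp hX hr
  set G : Matrix (Fin m') (Fin 3) ℝ := Matrix.of (fun k =>
    ![mInner (A k) (vecMulVec u u), mInner (A k) (vecMulVec u w + vecMulVec w u),
      mInner (A k) (vecMulVec w w)]) with hGdef
  have hker : ∃ s : Fin 3 → ℝ, s ≠ 0 ∧ G.mulVecLin s = 0 := by
    by_contra hcon
    push_neg at hcon
    have hinj : Function.Injective G.mulVecLin := by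
      rw [← LinearMap.ker_eq_bot, Submodule.eq_bot_iff]
      intro v hv
      by_contra hv0
      exact hcon v hv0 hv
    have h3 := LinearMap.finrank_le_finrank_of_injective hinj
    rw [Module.finrank_fin_fun, Module.finrank_fin_fun] at h3
    omega
  obtain ⟨s, hs0, hGs⟩ := hker
  set D : Matrix (Fin n) (Fin n) ℝ := blk u w (s 0) (s 1) (s 2) with hDdef
  have hAD : ∀ k, mInner (A k) D = 0 := by
    intro k
    have hk := congrFun hGs k
    rw [Matrix.mulVecLin_apply] at hk
    have heq : (G *ᵥ s) k = mInner (A k) D := by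
      rw [hDdef, mInner_blk]
      simp only [Matrix.mulVec, dotProduct, Fin.sum_univ_three, hGdef, Matrix.of_apply]
      simp only [Matrix.cons_val_zero, Matrix.cons_val_one, Matrix.head_cons,
        Matrix.cons_val_two, Matrix.tail_cons]
      ring
    rw [heq] at hk
    exact hk
  have hXtD : ∀ t : ℝ, X + t • D = B + blk u w (a + t * s 0) (0 + t * s 1) (c + t * s 2) := by
    intro t
    rw [hXeq, add_assoc, hDdef, blk_combine]
  by_cases hA0D : mInner A0 D = 0
  · right
    have hsigma : ∃ t1 : ℝ, t1 ≠ 0 ∧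
        (a + t1 * s 0) * (c + t1 * s 2) - (t1 * s 1) ^ 2 ≤ 0 := by
      by_cases h0 : s 0 ≠ 0
      · refine ⟨-a / s 0, div_ne_zero (neg_ne_zero.mpr hapos.ne') h0, ?_⟩
        have hz : a + -a / s 0 * s 0 = 0 := by field_simp; ring
        rw [hz, zero_mul]
        nlinarith [sq_nonneg (-a / s 0 * s 1)]
      · push_neg at h0
        by_cases h2 : s 2 ≠ 0
        · refine ⟨-c / s 2, div_ne_zero (neg_ne_zero.mpr hcpos.ne') h2, ?_⟩
          have hz : c + -c / s 2 * s 2 = 0 := by field_simp; ring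
          rw [hz, mul_zero]
          nlinarith [sq_nonneg (-c / s 2 * s 1)]
        · push_neg at h2
          have h1 : s 1 ≠ 0 := by
            intro h1
            apply hs0
            funext l
            fin_cases l <;> simp [h0, h1, h2]
          refine ⟨Real.sqrt (a * c) / s 1,
            div_ne_zero (Real.sqrt_ne_zero'.mpr (by positivity)) h1, ?_⟩
          rw [h0, h2]
          have hsq : (Real.sqrt (a * c) / s 1 * s 1) ^ 2 = a * c := by
            rw [div_mul_cancel₀ _ h1, Real.sq_sqrt (by positivity : (0:ℝ) ≤ a * c)]
          rw [hsq]
          simp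
    obtain ⟨t1, ht1ne, hqt1⟩ := hsigma
    rcases ht1ne.lt_or_gt with hneg | hpos
    · have hq1' : (a + (-t1) * (-(s 0))) * (c + (-t1) * (-(s 2))) - ((-t1) * (-(s 1))) ^ 2 ≤ 0 := by
        nlinarith [hqt1]
      obtain ⟨r, hrpos, hqr, hra, hrc⟩ := exists_root hapos hcpos (by linarith) hq1'
      have h1 : a + (-r) * s 0 = a + r * -(s 0) := by ring
      have h2 : c + (-r) * s 2 = c + r * -(s 2) := by ring
      exact block_conclude A0 A hB hrB hXtD hAD hA0D (-r)
        (by rw [h1]; exact hra) (by rw [h2]; exact hrc)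
        (by rw [h1, h2]; nlinarith [hqr])
    · obtain ⟨r, hrpos, hqr, hra, hrc⟩ := exists_root hapos hcpos hpos hqt1
      exact block_conclude A0 A hB hrB hXtD hAD hA0D r hra hrc (by nlinarith [hqr])
  · left
    refine ⟨D, hA0D, hAD, min a c / (2 * (|s 0| + |s 1| + |s 2| + 1)), by positivity, ?_⟩
    intro t ht
    set K := |s 0| + |s 1| + |s 2| + 1 with hK
    have hKpos : 0 < K := by positivity
    have hminpos : 0 < min a c := lt_min hapos hcpos
    have habs : ∀ l : Fin 3, |t * s l| ≤ min a c / 2 := by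
      intro l
      rw [abs_mul]
      have h1 : |s l| ≤ K := by
        have n0 := abs_nonneg (s 0)
        have n1 := abs_nonneg (s 1)
        have n2 := abs_nonneg (s 2)
        rw [hK]
        fin_cases l
        · show |s 0| ≤ |s 0| + |s 1| + |s 2| + 1
          linarith
        · show |s 1| ≤ |s 0| + |s 1| + |s 2| + 1
          linarith
        · show |s 2| ≤ |s 0| + |s 1| + |s 2| + 1
          linarith
      have htnn : |t| ≤ min a c / (2 * K) := ht
      calc |t| * |s l| ≤ (min a c / (2 * K)) * K :=
            mul_le_mul htnn h1 (abs_nonneg _) (by positivity)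
        _ = min a c / 2 := by field_simp
    have hma : min a c ≤ a := min_le_left _ _
    have hmc : min a c ≤ c := min_le_right _ _
    have ha' : a / 2 ≤ a + t * s 0 := by
      have := habs 0
      have := abs_le.mp this
      linarith [this.1]
    have hc' : c / 2 ≤ c + t * s 2 := by
      have := habs 2
      have := abs_le.mp this
      linarith [this.1]
    have hb' : (0 + t * s 1) * (0 + t * s 1) ≤ (a + t * s 0) * (c + t * s 2) := by
      have h1 := habs 1
      have h2 : (t * s 1) * (t * s 1) ≤ (min a c / 2) * (min a c / 2) := by
        rw [← abs_mul_abs_self (t * s 1)]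
        exact mul_le_mul h1 h1 (abs_nonneg _) (by positivity)
      have h3 : (min a c / 2) * (min a c / 2) ≤ (a / 2) * (c / 2) := by
        apply mul_le_mul (by linarith) (by linarith) (by positivity) (by positivity)
      have h4 : (a / 2) * (c / 2) ≤ (a + t * s 0) * (c + t * s 2) := by
        apply mul_le_mul ha' hc' (by positivity) (by linarith)
      calc (0 + t * s 1) * (0 + t * s 1) = (t * s 1) * (t * s 1) := by ring
        _ ≤ (a + t * s 0) * (c + t * s 2) := by linarith
    rw [hXtD t]
    exact hB.add (blk_psd (by linarith) (by linarith) hb')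

end SDPAux

/-- **Corollary 4.7.** If `m ≤ 2` and SDPR(δ) has an optimal solution, then SDPR(δ)
admits an optimal solution all of whose blocks have rank at most one. -/


theorem homogeneous_rank_one_optimal_of_m_le_two
    (qhat m : ℕ) (hqhat : 0 < qhat) (hm : 0 < m) (hm2 : m ≤ 2)
    (nb : Fin qhat → ℕ)
    (C : (q : Fin qhat) → Fin (m + 1) → Matrix (Fin (nb q)) (Fin (nb q)) ℝ)
    (hCsymm : ∀ q k, (C q k).IsSymm)
    (rel : Fin m → ℝ → ℝ → Prop) (hrel : ∀ k, IsStdRel (rel k))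
    (δ : Fin m → ℝ)
    (hB : ∃ V : (q : Fin qhat) → Matrix (Fin (nb q)) (Fin (nb q)) ℝ,
      homSDPROpt qhat m nb C rel δ V) :
    ∃ Vt : (q : Fin qhat) → Matrix (Fin (nb q)) (Fin (nb q)) ℝ,
      homSDPROpt qhat m nb C rel δ Vt ∧ ∀ q, (Vt q).rank ≤ 1 := by
  classical
  obtain ⟨V, hV⟩ := hB
  suffices h : ∀ (N : ℕ) (V : (q : Fin qhat) → Matrix (Fin (nb q)) (Fin (nb q)) ℝ),
      homSDPROpt qhat m nb C rel δ V → (∑ q, (V q).rank) ≤ N →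
      ∃ Vt : (q : Fin qhat) → Matrix (Fin (nb q)) (Fin (nb q)) ℝ,
        homSDPROpt qhat m nb C rel δ Vt ∧ ∀ q, (Vt q).rank ≤ 1 by
    exact h (∑ q, (V q).rank) V hV le_rfl
  intro N
  induction N with
  | zero =>
    intro V hopt hsum
    refine ⟨V, hopt, fun q => ?_⟩
    have h1 : (V q).rank ≤ ∑ p, (V p).rank :=
      Finset.single_le_sum (f := fun p => (V p).rank) (fun _ _ => Nat.zero_le _)
        (Finset.mem_univ q)
    omega
  | succ N ih =>
    intro V hopt hsum
    by_cases hall : ∀ q, (V q).rank ≤ 1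
    · exact ⟨V, hopt, hall⟩
    · push_neg at hall
      obtain ⟨q0, hq0⟩ := hall
      have hr2 : 2 ≤ (V q0).rank := by omega
      have hpsd := hopt.1.1 q0
      rcases SDPAux.block_step hm2 (C q0 0) (fun k => C q0 k.succ) hpsd hr2 with
        ⟨D, hne, hzero, τ, hτ, hDpsd⟩ | ⟨Y, hYpsd, hYrank, hY0, hYk⟩
      · exfalso
        set ε : ℝ := if 0 < mInner (C q0 0) D then -τ else τ with hε
        have hεabs : |ε| ≤ τ := by
          rw [hε]
          split
          · rw [abs_neg, abs_of_pos hτ]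
          · rw [abs_of_pos hτ]
        have hεneg : ε * mInner (C q0 0) D < 0 := by
          rw [hε]
          split
          · rename_i h
            nlinarith
          · rename_i h
            push_neg at h
            exact mul_neg_of_pos_of_neg hτ (lt_of_le_of_ne h hne)
        set V' := Function.update V q0 (V q0 + ε • D) with hV'
        have hterm : ∀ (k : Fin (m + 1)) (q : Fin qhat), mInner (C q k) (V' q)
            = mInner (C q k) (V q) + (if q = q0 then ε * mInner (C q0 k) D else 0) := by
          intro k q
          by_cases h : q = q0
          · subst h
            rw [hV', Function.update_self, SDPAux.mInner_add, SDPAux.mInner_smul]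
            simp
          · rw [hV', Function.update_of_ne h]
            simp [h]
        have hkey : ∀ k : Fin (m + 1), ∑ q, mInner (C q k) (V' q)
            = (∑ q, mInner (C q k) (V q)) + ε * mInner (C q0 k) D := by
          intro k
          rw [Finset.sum_congr rfl (fun q _ => hterm k q), Finset.sum_add_distrib]
          congr 1
          simp
        have hfeas : homSDPRFeas qhat m nb C rel δ V' := by
          constructor
          · intro q
            by_cases h : q = q0
            · subst h
              rw [hV', Function.update_self]
              exact hDpsd ε hεabs
            · rw [hV', Function.update_of_ne h]
              exact hopt.1.1 q
          · intro k
            have := hopt.1.2 k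
            rw [hkey k.succ, hzero k, mul_zero, add_zero]
            exact this
        have hmem : ((∑ q, mInner (C q 0) (V' q) : ℝ) : EReal) ∈
            {y : EReal | ∃ W : (q : Fin qhat) → Matrix (Fin (nb q)) (Fin (nb q)) ℝ,
              homSDPRFeas qhat m nb C rel δ W ∧
              y = ((∑ q, mInner (C q 0) (W q) : ℝ) : EReal)} := ⟨V', hfeas, rfl⟩
        have hle : homSDPRVal qhat m nb C rel δ ≤
            ((∑ q, mInner (C q 0) (V' q) : ℝ) : EReal) := sInf_le hmem
        rw [← hopt.2] at hle
        have hle' : (∑ q, mInner (C q 0) (V q)) ≤ ∑ q, mInner (C q 0) (V' q) :=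
          EReal.coe_le_coe_iff.mp hle
        rw [hkey 0] at hle'
        linarith
      · -- rank reduction step
        set V' := Function.update V q0 Y with hV'
        have hmval : ∀ k : Fin (m + 1), mInner (C q0 k) Y = mInner (C q0 k) (V q0) := by
          intro k
          induction k using Fin.cases with
          | zero => exact hY0
          | succ k => exact hYk k
        have hterm : ∀ (k : Fin (m + 1)) (q : Fin qhat),
            mInner (C q k) (V' q) = mInner (C q k) (V q) := by
          intro k q
          by_cases h : q = q0
          · subst h
            rw [hV', Function.update_self]
            exact hmval k
          · rw [hV', Function.update_of_ne h]
        have hopt' : homSDPROpt qhat m nb C rel δ V' := by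
          refine ⟨⟨?_, ?_⟩, ?_⟩
          · intro q
            by_cases h : q = q0
            · subst h
              rw [hV', Function.update_self]
              exact hYpsd
            · rw [hV', Function.update_of_ne h]
              exact hopt.1.1 q
          · intro k
            have := hopt.1.2 k
            rw [Finset.sum_congr rfl (fun q _ => hterm k.succ q)]
            exact this
          · rw [Finset.sum_congr rfl (fun q _ => hterm 0 q)]
            exact hopt.2
        have hranksum : ∑ q, (V' q).rank ≤ N := by
          have e1 : ∑ q, (V' q).rank
              = (V' q0).rank + ∑ q ∈ Finset.univ.erase q0, (V' q).rank :=
            (Finset.add_sum_erase _ _ (Finset.mem_univ q0)).symm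
          have e2 : ∑ q, (V q).rank
              = (V q0).rank + ∑ q ∈ Finset.univ.erase q0, (V q).rank :=
            (Finset.add_sum_erase _ _ (Finset.mem_univ q0)).symm
          have e3 : ∑ q ∈ Finset.univ.erase q0, (V' q).rank
              = ∑ q ∈ Finset.univ.erase q0, (V q).rank := by
            apply Finset.sum_congr rfl
            intro q hq
            rw [hV', Function.update_of_ne (Finset.ne_of_mem_erase hq)]
          have e4 : (V' q0).rank = Y.rank := by rw [hV', Function.update_self]
          omega
        exact ih V' hopt' hranksum
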